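/- There exist three invertible pairs (f₁,g₁), (f₂,g₂), (f₃,g₃) in the real disc algebra A_ℝ(D) such that each two of the three pairs are sign-linked, yet the three pairs are not simultaneously stabilizable: there exist no α, β ∈ A_ℝ(D) such that αf_j + βg_j is a unit of A_ℝ(D) for all j = 1, 2, 3. -/

import Mathlib

open Complex Metric ComplexConjugate

/-- The real disc algebra `A_ℝ(D)`: functions continuous on the closed unit disc,
holomorphic on the open unit disc, satisfying `f z = conj (f (conj z))` on the closed disc. -/
def IsRDisc (f : ℂ → ℂ) : Prop :=
  ContinuousOn f (closedBall (0 : ℂ) 1) ∧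
  DifferentiableOn ℂ f (ball (0 : ℂ) 1) ∧
  ∀ z ∈ closedBall (0 : ℂ) 1, f z = conj (f (conj z))

/-- A unit of `A_ℝ(D)`: a member of the algebra with no zeros on the closed unit disc. -/
def IsRDiscUnit (f : ℂ → ℂ) : Prop :=
  IsRDisc f ∧ ∀ z ∈ closedBall (0 : ℂ) 1, f z ≠ 0

/-- The pair `(f, g)` is invertible in `A_ℝ(D)`: there are `α, β` in the algebra with
`α f + β g = 1` on the closed unit disc. -/
def BezoutPair (f g : ℂ → ℂ) : Prop :=
  ∃ α β : ℂ → ℂ, IsRDisc α ∧ IsRDisc β ∧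
    ∀ z ∈ closedBall (0 : ℂ) 1, α z * f z + β z * g z = 1

/-- The pairs `(f₁,g₁)` and `(f₂,g₂)` are sign-linked. -/
def SignLinked (f₁ g₁ f₂ g₂ : ℂ → ℂ) : Prop :=
  ∀ x y : ℝ, x ∈ Set.Icc (-1 : ℝ) 1 → y ∈ Set.Icc (-1 : ℝ) 1 →
    f₁ (x : ℂ) * g₂ (x : ℂ) - f₂ (x : ℂ) * g₁ (x : ℂ) = 0 →
    f₁ (y : ℂ) * g₂ (y : ℂ) - f₂ (y : ℂ) * g₁ (y : ℂ) = 0 →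
    ∀ lam mu : ℝ,
      f₂ (x : ℂ) = (lam : ℂ) * f₁ (x : ℂ) → g₂ (x : ℂ) = (lam : ℂ) * g₁ (x : ℂ) →
      f₂ (y : ℂ) = (mu : ℂ) * f₁ (y : ℂ) → g₂ (y : ℂ) = (mu : ℂ) * g₁ (y : ℂ) →
      0 < lam * mu

/-- `f` has constant sign on the real zeros of `g`: the (real) values `f x` over
`x ∈ [-1,1]` with `g x = 0` are either all positive or all negative. -/
def ConstSignOnRealZeros (f g : ℂ → ℂ) : Prop :=
  (∀ x ∈ Set.Icc (-1 : ℝ) 1, g (x : ℂ) = 0 → 0 < (f (x : ℂ)).re) ∨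
  (∀ x ∈ Set.Icc (-1 : ℝ) 1, g (x : ℂ) = 0 → (f (x : ℂ)).re < 0)

/-! Auxiliary lemmas -/

lemma aux_isRDisc_of (f : ℂ → ℂ) (hc : Continuous f) (hd : Differentiable ℂ f)
    (hsym : ∀ z, f z = conj (f (conj z))) : IsRDisc f :=
  ⟨hc.continuousOn, hd.differentiableOn, fun z _ => hsym z⟩

lemma aux_mem_cb {x : ℝ} (hx : x ∈ Set.Icc (-1:ℝ) 1) : (x:ℂ) ∈ closedBall (0:ℂ) 1 := by
  rw [mem_closedBall, dist_zero_right]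
  simpa using abs_le.mpr ⟨hx.1, hx.2⟩

lemma aux_real_val {f : ℂ → ℂ} (hf : ∀ z ∈ closedBall (0:ℂ) 1, f z = conj (f (conj z)))
    {x : ℝ} (hx : x ∈ Set.Icc (-1:ℝ) 1) : f x = ((f (x:ℂ)).re : ℂ) := by
  have h := hf (x:ℂ) (aux_mem_cb hx)
  rw [Complex.conj_ofReal] at h
  exact (Complex.conj_eq_iff_re.mp h.symm).symm

lemma aux_pos_pos {u v : ℝ} (h : 0 < u * v) (hu : 0 < u) : 0 < v := by nlinarith

lemma aux_pos_neg {u v : ℝ} (h : 0 < u * v) (hu : u < 0) : v < 0 := by nlinarith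

/-- A continuous nonvanishing real function on `[-1,1]` has constant sign. -/
lemma aux_sign_const {F : ℝ → ℝ} (hc : ContinuousOn F (Set.Icc (-1:ℝ) 1))
    (h0 : ∀ t ∈ Set.Icc (-1:ℝ) 1, F t ≠ 0)
    {x y : ℝ} (hx : x ∈ Set.Icc (-1:ℝ) 1) (hy : y ∈ Set.Icc (-1:ℝ) 1) :
    0 < F x * F y := by
  have hsub : Set.uIcc x y ⊆ Set.Icc (-1:ℝ) 1 := by
    rw [show Set.Icc (-1:ℝ) 1 = Set.uIcc (-1:ℝ) 1 by
      rw [Set.uIcc_of_le (by norm_num)]]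
    exact Set.uIcc_subset_uIcc (by rwa [Set.uIcc_of_le (by norm_num)])
      (by rwa [Set.uIcc_of_le (by norm_num)])
  have key : ¬ (0 : ℝ) ∈ Set.uIcc (F x) (F y) := by
    intro h0'
    obtain ⟨t, ht, hFt⟩ := intermediate_value_uIcc (hc.mono hsub) h0'
    exact h0 t (hsub ht) hFt
  rcases lt_or_gt_of_ne (h0 x hx) with hxn | hxp
  · rcases lt_or_gt_of_ne (h0 y hy) with hyn | hyp
    · exact mul_pos_of_neg_of_neg hxn hyn
    · exact absurd (Set.mem_uIcc.mpr (Or.inl ⟨hxn.le, hyp.le⟩)) key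
  · rcases lt_or_gt_of_ne (h0 y hy) with hyn | hyp
    · exact absurd (Set.mem_uIcc.mpr (Or.inr ⟨hyn.le, hxp.le⟩)) key
    · exact mul_pos hxp hyp

set_option maxHeartbeats 2000000 in
theorem three_pairs_not_simultaneously_stabilizable :
    ∃ f₁ g₁ f₂ g₂ f₃ g₃ : ℂ → ℂ,
      IsRDisc f₁ ∧ IsRDisc g₁ ∧ IsRDisc f₂ ∧ IsRDisc g₂ ∧ IsRDisc f₃ ∧ IsRDisc g₃ ∧
      BezoutPair f₁ g₁ ∧ BezoutPair f₂ g₂ ∧ BezoutPair f₃ g₃ ∧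
      SignLinked f₁ g₁ f₂ g₂ ∧ SignLinked f₁ g₁ f₃ g₃ ∧ SignLinked f₂ g₂ f₃ g₃ ∧
      ¬ ∃ α β : ℂ → ℂ, IsRDisc α ∧ IsRDisc β ∧
          IsRDiscUnit (fun z => α z * f₁ z + β z * g₁ z) ∧
          IsRDiscUnit (fun z => α z * f₂ z + β z * g₂ z) ∧
          IsRDiscUnit (fun z => α z * f₃ z + β z * g₃ z) := by
  have hD1 : IsRDisc (fun _ : ℂ => (1:ℂ)) :=
    aux_isRDisc_of _ continuous_const (differentiable_const _) (fun z => by simp)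
  have hD0 : IsRDisc (fun _ : ℂ => (0:ℂ)) :=
    aux_isRDisc_of _ continuous_const (differentiable_const _) (fun z => by simp)
  have hDm1 : IsRDisc (fun _ : ℂ => (-1:ℂ)) :=
    aux_isRDisc_of _ continuous_const (differentiable_const _) (fun z => by simp)
  have hDg2 : IsRDisc (fun z : ℂ => -z - 3/4) :=
    aux_isRDisc_of _ (by fun_prop) (by fun_prop)
      (fun z => by simp [map_sub, map_neg, map_div₀, map_ofNat])
  have hDf3 : IsRDisc (fun z : ℂ => 1 - 2*z) :=
    aux_isRDisc_of _ (by fun_prop) (by fun_prop)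
      (fun z => by simp [map_sub, map_mul, map_ofNat])
  have hDg3 : IsRDisc (fun z : ℂ => 1/16 - z^2) :=
    aux_isRDisc_of _ (by fun_prop) (by fun_prop)
      (fun z => by simp [map_sub, map_div₀, map_pow, map_ofNat])
  have hDa3 : IsRDisc (fun z : ℂ => 4/3 + 8/3*z) :=
    aux_isRDisc_of _ (by fun_prop) (by fun_prop)
      (fun z => by simp [map_add, map_mul, map_div₀, map_ofNat])
  have hDb3 : IsRDisc (fun _ : ℂ => (-16/3 : ℂ)) :=
    aux_isRDisc_of _ continuous_const (differentiable_const _)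
      (fun z => by simp [map_div₀, map_neg, map_ofNat])
  refine ⟨(fun _ => 1), (fun _ => 0), (fun _ => -1), (fun z => -z - 3/4),
    (fun z => 1 - 2*z), (fun z => 1/16 - z^2),
    hD1, hD0, hDm1, hDg2, hDf3, hDg3, ?_, ?_, ?_, ?_, ?_, ?_, ?_⟩
  · -- BezoutPair 1
    exact ⟨(fun _ => 1), (fun _ => 0), hD1, hD0, fun z _ => by ring⟩
  · -- BezoutPair 2
    exact ⟨(fun _ => -1), (fun _ => 0), hDm1, hD0, fun z _ => by ring⟩
  · -- BezoutPair 3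
    exact ⟨(fun z => 4/3 + 8/3*z), (fun _ => -16/3), hDa3, hDb3, fun z _ => by ring⟩
  · -- SignLinked (1,0) (-1, -z-3/4)
    intro x y hx hy hdx hdy lam mu h1 h2 h3 h4
    dsimp only at h1 h3
    have hl : lam = -1 := by
      have : ((lam:ℝ):ℂ) = ((-1:ℝ):ℂ) := by push_cast; linear_combination -h1
      exact_mod_cast this
    have hm : mu = -1 := by
      have : ((mu:ℝ):ℂ) = ((-1:ℝ):ℂ) := by push_cast; linear_combination -h3
      exact_mod_cast this
    rw [hl, hm]; norm_num
  · -- SignLinked (1,0) (1-2z, 1/16-z²)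
    intro x y hx hy hdx hdy lam mu h1 h2 h3 h4
    dsimp only at hdx hdy h1 h3
    have hx2 : x^2 = 1/16 := by
      have : ((x^2:ℝ):ℂ) = ((1/16:ℝ):ℂ) := by push_cast; linear_combination -hdx
      exact_mod_cast this
    have hy2 : y^2 = 1/16 := by
      have : ((y^2:ℝ):ℂ) = ((1/16:ℝ):ℂ) := by push_cast; linear_combination -hdy
      exact_mod_cast this
    have hl : lam = 1 - 2*x := by
      have : ((lam:ℝ):ℂ) = ((1-2*x:ℝ):ℂ) := by push_cast; linear_combination -h1
      exact_mod_cast this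
    have hm : mu = 1 - 2*y := by
      have : ((mu:ℝ):ℂ) = ((1-2*y:ℝ):ℂ) := by push_cast; linear_combination -h3
      exact_mod_cast this
    have hxle : x ≤ 1/4 := by nlinarith [sq_nonneg (x - 1/4), sq_nonneg (x + 1/4)]
    have hyle : y ≤ 1/4 := by nlinarith [sq_nonneg (y - 1/4), sq_nonneg (y + 1/4)]
    have : (0:ℝ) < lam := by rw [hl]; linarith
    have : (0:ℝ) < mu := by rw [hm]; linarith
    positivity
  · -- SignLinked (-1, -z-3/4) (1-2z, 1/16-z²)
    intro x y hx hy hdx hdy lam mu h1 h2 h3 h4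
    dsimp only at hdx hdy h1 h3
    have hx2 : x^2 + x/2 = 11/16 := by
      have : ((x^2 + x/2:ℝ):ℂ) = ((11/16:ℝ):ℂ) := by push_cast; linear_combination -hdx
      exact_mod_cast this
    have hy2 : y^2 + y/2 = 11/16 := by
      have : ((y^2 + y/2:ℝ):ℂ) = ((11/16:ℝ):ℂ) := by push_cast; linear_combination -hdy
      exact_mod_cast this
    have hl : lam = 2*x - 1 := by
      have : ((lam:ℝ):ℂ) = ((2*x-1:ℝ):ℂ) := by push_cast; linear_combination h1
      exact_mod_cast this
    have hm : mu = 2*y - 1 := by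
      have : ((mu:ℝ):ℂ) = ((2*y-1:ℝ):ℂ) := by push_cast; linear_combination h3
      exact_mod_cast this
    have hxgt : 1/2 < x := by
      by_contra h
      push_neg at h
      nlinarith [mul_nonneg (by linarith [hx.1] : (0:ℝ) ≤ x + 1) (by linarith : (0:ℝ) ≤ 1/2 - x)]
    have hygt : 1/2 < y := by
      by_contra h
      push_neg at h
      nlinarith [mul_nonneg (by linarith [hy.1] : (0:ℝ) ≤ y + 1) (by linarith : (0:ℝ) ≤ 1/2 - y)]
    have : (0:ℝ) < lam := by rw [hl]; linarith
    have : (0:ℝ) < mu := by rw [hm]; linarith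
    positivity
  · -- not simultaneously stabilizable
    rintro ⟨α, β, hα, hβ, h1, h2, h3⟩
    -- the three combinations as complex functions
    set u₁ : ℂ → ℂ := fun z => α z * 1 + β z * 0 with hu₁def
    set u₂ : ℂ → ℂ := fun z => α z * (-1) + β z * (-z - 3/4) with hu₂def
    set u₃ : ℂ → ℂ := fun z => α z * (1 - 2*z) + β z * (1/16 - z^2) with hu₃def
    have h1' : IsRDiscUnit u₁ := h1
    have h2' : IsRDiscUnit u₂ := h2
    have h3' : IsRDiscUnit u₃ := h3
    -- real restrictions
    set F₁ : ℝ → ℝ := fun t => (u₁ (t:ℂ)).re with hF₁def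
    set F₂ : ℝ → ℝ := fun t => (u₂ (t:ℂ)).re with hF₂def
    set F₃ : ℝ → ℝ := fun t => (u₃ (t:ℂ)).re with hF₃def
    have hIcc : ∀ t : ℝ, t ∈ Set.Icc (-1:ℝ) 1 → (t:ℂ) ∈ closedBall (0:ℂ) 1 :=
      fun t ht => aux_mem_cb ht
    -- continuity of the real restrictions
    have hcont : ∀ (u : ℂ → ℂ), IsRDiscUnit u →
        ContinuousOn (fun t : ℝ => (u (t:ℂ)).re) (Set.Icc (-1:ℝ) 1) := by
      intro u hu
      have hmap : Set.MapsTo (fun t : ℝ => (t:ℂ)) (Set.Icc (-1:ℝ) 1) (closedBall (0:ℂ) 1) :=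
        fun t ht => hIcc t ht
      exact Complex.continuous_re.comp_continuousOn
        (hu.1.1.comp Complex.continuous_ofReal.continuousOn hmap)
    have hne : ∀ (u : ℂ → ℂ), IsRDiscUnit u → ∀ t ∈ Set.Icc (-1:ℝ) 1,
        (u (t:ℂ)).re ≠ 0 := by
      intro u hu t ht h0
      have hr : u (t:ℂ) = (((u (t:ℂ)).re : ℝ) : ℂ) := aux_real_val hu.1.2.2 ht
      exact hu.2 (t:ℂ) (hIcc t ht) (by rw [hr, h0]; simp)
    -- sign constancy products
    have hsg₁ := fun {x y} hx hy => aux_sign_const (hcont u₁ h1') (hne u₁ h1') (x := x) (y := y) hx hy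
    have hsg₂ := fun {x y} hx hy => aux_sign_const (hcont u₂ h2') (hne u₂ h2') (x := x) (y := y) hx hy
    have hsg₃ := fun {x y} hx hy => aux_sign_const (hcont u₃ h3') (hne u₃ h3') (x := x) (y := y) hx hy
    -- membership of the four sample points
    have hm1 : (-1:ℝ) ∈ Set.Icc (-1:ℝ) 1 := by norm_num
    have hm2 : (-1/2:ℝ) ∈ Set.Icc (-1:ℝ) 1 := by norm_num
    have hm3 : (0:ℝ) ∈ Set.Icc (-1:ℝ) 1 := by norm_num
    have hm4 : (1:ℝ) ∈ Set.Icc (-1:ℝ) 1 := by norm_num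
    -- real values of α and β at sample points
    have hαr : ∀ t : ℝ, t ∈ Set.Icc (-1:ℝ) 1 → α (t:ℂ) = (((α (t:ℂ)).re : ℝ) : ℂ) :=
      fun t ht => aux_real_val hα.2.2 ht
    have hβr : ∀ t : ℝ, t ∈ Set.Icc (-1:ℝ) 1 → β (t:ℂ) = (((β (t:ℂ)).re : ℝ) : ℂ) :=
      fun t ht => aux_real_val hβ.2.2 ht
    -- expression of F-values in terms of a := Re α, b := Re β
    have hval : ∀ t : ℝ, t ∈ Set.Icc (-1:ℝ) 1 →
        F₁ t = (α (t:ℂ)).re ∧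
        F₂ t = -(α (t:ℂ)).re + (β (t:ℂ)).re * (-t - 3/4) ∧
        F₃ t = (α (t:ℂ)).re * (1 - 2*t) + (β (t:ℂ)).re * (1/16 - t^2) := by
      intro t ht
      set a := (α (t:ℂ)).re
      set b := (β (t:ℂ)).re
      have ha := hαr t ht
      have hb := hβr t ht
      refine ⟨?_, ?_, ?_⟩
      · show (α (t:ℂ) * 1 + β (t:ℂ) * 0).re = a
        rw [ha, hb]; simp; rfl
      · show (α (t:ℂ) * (-1) + β (t:ℂ) * (-(t:ℂ) - 3/4)).re = -a + b * (-t - 3/4)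
        rw [ha, hb]
        have : ((a:ℂ)) * (-1) + ((b:ℂ)) * (-(t:ℂ) - 3/4)
            = (((-a + b * (-t - 3/4) : ℝ)) : ℂ) := by push_cast; ring
        rw [this, Complex.ofReal_re]
      · show (α (t:ℂ) * (1 - 2*(t:ℂ)) + β (t:ℂ) * (1/16 - (t:ℂ)^2)).re
            = a * (1 - 2*t) + b * (1/16 - t^2)
        rw [ha, hb]
        have : ((a:ℂ)) * (1 - 2*(t:ℂ)) + ((b:ℂ)) * (1/16 - (t:ℂ)^2)
            = (((a * (1 - 2*t) + b * (1/16 - t^2) : ℝ)) : ℂ) := by push_cast; ring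
        rw [this, Complex.ofReal_re]
    obtain ⟨e11, e21, e31⟩ := hval (-1) hm1
    obtain ⟨e12, e22, e32⟩ := hval (-1/2) hm2
    obtain ⟨e13, e23, e33⟩ := hval 0 hm3
    obtain ⟨e14, e24, e34⟩ := hval 1 hm4
    set a1 := (α ((-1:ℝ):ℂ)).re; set b1 := (β ((-1:ℝ):ℂ)).re
    set a2 := (α ((-1/2:ℝ):ℂ)).re; set b2 := (β ((-1/2:ℝ):ℂ)).re
    set a3 := (α ((0:ℝ):ℂ)).re; set b3 := (β ((0:ℝ):ℂ)).re
    set a4 := (α ((1:ℝ):ℂ)).re; set b4 := (β ((1:ℝ):ℂ)).re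
    -- numeric values
    have v11 : F₁ (-1) = a1 := e11
    have v21 : F₂ (-1) = -a1 + b1 * (1/4) := by rw [e21]; ring_nf
    have v31 : F₃ (-1) = a1 * 3 + b1 * (-15/16) := by rw [e31]; ring_nf
    have v12 : F₁ (-1/2) = a2 := e12
    have v22 : F₂ (-1/2) = -a2 + b2 * (-1/4) := by rw [e22]; ring_nf
    have v32 : F₃ (-1/2) = a2 * 2 + b2 * (-3/16) := by rw [e32]; ring_nf
    have v13 : F₁ 0 = a3 := e13
    have v23 : F₂ 0 = -a3 + b3 * (-3/4) := by rw [e23]; ring_nf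
    have v33 : F₃ 0 = a3 + b3 * (1/16) := by rw [e33]; ring_nf
    have v14 : F₁ 1 = a4 := e14
    have v24 : F₂ 1 = -a4 + b4 * (-7/4) := by rw [e24]; ring_nf
    have v34 : F₃ 1 = -a4 + b4 * (-15/16) := by rw [e34]; ring_nf
    -- sign transfers from the reference point -1
    have p12 := hsg₁ hm1 hm2
    have p13 := hsg₁ hm1 hm3
    have p14 := hsg₁ hm1 hm4
    have q12 := hsg₂ hm1 hm2
    have q13 := hsg₂ hm1 hm3
    have q14 := hsg₂ hm1 hm4
    have r12 := hsg₃ hm1 hm2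
    have r13 := hsg₃ hm1 hm3
    have r14 := hsg₃ hm1 hm4
    have hne1 := hne u₁ h1' (-1) hm1
    have hne2 := hne u₂ h2' (-1) hm1
    have hne3 := hne u₃ h3' (-1) hm1
    -- case analysis on the signs at -1
    rcases lt_or_gt_of_ne hne1 with s1 | s1 <;>
      rcases lt_or_gt_of_ne hne2 with s2 | s2 <;>
        rcases lt_or_gt_of_ne hne3 with s3 | s3
    -- (−,−,−): point -1
    · have t1 : F₁ (-1) < 0 := s1
      have t2 : F₂ (-1) < 0 := s2
      have t3 : F₃ (-1) < 0 := s3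
      rw [v11] at t1; rw [v21] at t2; rw [v31] at t3; linarith
    -- (−,−,+): point -1/2
    · have t1 : F₁ (-1/2) < 0 := aux_pos_neg p12 s1
      have t2 : F₂ (-1/2) < 0 := aux_pos_neg q12 s2
      have t3 : 0 < F₃ (-1/2) := aux_pos_pos r12 s3
      rw [v12] at t1; rw [v22] at t2; rw [v32] at t3; linarith
    -- (−,+,−): point 1
    · have t1 : F₁ 1 < 0 := aux_pos_neg p14 s1
      have t2 : 0 < F₂ 1 := aux_pos_pos q14 s2
      have t3 : F₃ 1 < 0 := aux_pos_neg r14 s3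
      rw [v14] at t1; rw [v24] at t2; rw [v34] at t3; linarith
    -- (−,+,+): point 0
    · have t1 : F₁ 0 < 0 := aux_pos_neg p13 s1
      have t2 : 0 < F₂ 0 := aux_pos_pos q13 s2
      have t3 : 0 < F₃ 0 := aux_pos_pos r13 s3
      rw [v13] at t1; rw [v23] at t2; rw [v33] at t3; linarith
    -- (+,−,−): point 0
    · have t1 : 0 < F₁ 0 := aux_pos_pos p13 s1
      have t2 : F₂ 0 < 0 := aux_pos_neg q13 s2
      have t3 : F₃ 0 < 0 := aux_pos_neg r13 s3
      rw [v13] at t1; rw [v23] at t2; rw [v33] at t3; linarith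
    -- (+,−,+): point 1
    · have t1 : 0 < F₁ 1 := aux_pos_pos p14 s1
      have t2 : F₂ 1 < 0 := aux_pos_neg q14 s2
      have t3 : 0 < F₃ 1 := aux_pos_pos r14 s3
      rw [v14] at t1; rw [v24] at t2; rw [v34] at t3; linarith
    -- (+,+,−): point -1/2
    · have t1 : 0 < F₁ (-1/2) := aux_pos_pos p12 s1
      have t2 : 0 < F₂ (-1/2) := aux_pos_pos q12 s2
      have t3 : F₃ (-1/2) < 0 := aux_pos_neg r12 s3
      rw [v12] at t1; rw [v22] at t2; rw [v32] at t3; linarith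
    -- (+,+,+): point -1
    · have t1 : 0 < F₁ (-1) := s1
      have t2 : 0 < F₂ (-1) := s2
      have t3 : 0 < F₃ (-1) := s3
      rw [v11] at t1; rw [v21] at t2; rw [v31] at t3; linarith
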